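/- A topological monoid M has the right small index property (every right congruence with countably many classes is open) if and only if every monoid homomorphism from M to the full transformation monoid ℕ^ℕ (with the pointwise topology, acting on the right) is continuous. -/

import Mathlib

open Topology

/-- The full transformation monoid `ℕ^ℕ`: all maps `ℕ → ℕ`, with functions acting
on the right and composed from left to right, i.e. `(f * g) i = g (f i)`. -/
def TransformationMonoid : Type := ℕ → ℕ

instance : Monoid TransformationMonoid where
  mul f g := fun i => g (f i)
  one := fun i => i
  mul_assoc _ _ _ := rfl
  one_mul _ := rfl
  mul_one _ := rfl

/-- The pointwise (product) topology on `ℕ^ℕ`, with `ℕ` discrete. -/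
instance : TopologicalSpace TransformationMonoid :=
  inferInstanceAs (TopologicalSpace (ℕ → ℕ))

lemma TransformationMonoid.mul_apply (f g : TransformationMonoid) (i : ℕ) :
    (f * g) i = g (f i) := rfl

/-- A topological monoid `M` has the right small index property (every right
congruence with countably many classes has all its classes open) if and only if
every monoid homomorphism from `M` to the full transformation monoid `ℕ^ℕ`, with
the pointwise topology, is continuous. -/
theorem stmt7 {M : Type*} [Monoid M] [TopologicalSpace M] [ContinuousMul M] :
    (∀ ρ : Setoid M, (∀ a b c : M, ρ.r a b → ρ.r (a * c) (b * c)) →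
      Countable (Quotient ρ) → ∀ m : M, IsOpen {x : M | ρ.r x m}) ↔
    (∀ φ : M →* TransformationMonoid, Continuous φ) := by
  constructor
  · intro h φ
    have key : ∀ i : ℕ, Continuous fun m : M => (φ m : ℕ → ℕ) i := by
      intro i
      rw [continuous_discrete_rng]
      intro j
      by_cases hne : ∃ m₀ : M, φ m₀ i = j
      · obtain ⟨m₀, hm₀⟩ := hne
        set ρ : Setoid M := ⟨fun a b => φ a i = φ b i,
          ⟨fun _ => rfl, Eq.symm, Eq.trans⟩⟩ with hρ
        have hmulφ : ∀ x y : M, φ (x * y) i = φ y (φ x i) := fun x y => by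
          rw [map_mul]; rfl
        have hcong : ∀ a b c : M, ρ.r a b → ρ.r (a * c) (b * c) := by
          intro a b c hab
          show φ (a * c) i = φ (b * c) i
          rw [hmulφ, hmulφ]
          exact congrArg _ hab
        have hcount : Countable (Quotient ρ) := by
          rw [countable_iff_exists_injective]
          refine ⟨Quotient.lift (fun a => φ a i) (fun a b hab => hab), ?_⟩
          intro x y
          induction x using Quotient.ind
          induction y using Quotient.ind
          intro hx
          exact Quotient.sound hx
        have hopen := h ρ hcong hcount m₀
        have : ((fun m : M => (φ m : ℕ → ℕ) i) ⁻¹' {j}) = {x : M | ρ.r x m₀} := by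
          ext x
          simp only [Set.mem_preimage, Set.mem_singleton_iff, Set.mem_setOf_eq]
          show φ x i = j ↔ φ x i = φ m₀ i
          rw [hm₀]
        rw [this]; exact hopen
      · have : ((fun m : M => (φ m : ℕ → ℕ) i) ⁻¹' {j}) = ∅ := by
          ext x
          simp only [Set.mem_preimage, Set.mem_singleton_iff, Set.mem_empty_iff_false,
            iff_false]
          exact fun hx => hne ⟨x, hx⟩
        rw [this]; exact isOpen_empty
    exact continuous_pi key
  · intro h ρ hcong hcount m
    obtain ⟨e, he⟩ := (countable_iff_exists_injective (Quotient ρ)).mp hcount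
    classical
    have hmap : ∀ c : M, ∀ a b : M, ρ.r a b → ρ.r (a * c) (b * c) :=
      fun c a b hab => hcong a b c hab
    let act : M → Quotient ρ → Quotient ρ := fun c => Quotient.map (· * c) (hmap c)
    have hact_one : ∀ q, act 1 q = q := by
      intro q; induction q using Quotient.ind with
      | _ a => show Quotient.mk ρ (a * 1) = Quotient.mk ρ a; rw [mul_one]
    have hact_mul : ∀ c d q, act (c * d) q = act d (act c q) := by
      intro c d q; induction q using Quotient.ind with
      | _ a =>
        show Quotient.mk ρ (a * (c * d)) = Quotient.mk ρ (a * c * d)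
        rw [mul_assoc]
    let F : M → TransformationMonoid := fun c => fun n =>
      if hq : ∃ q, e q = n then e (act c hq.choose) else n
    have hF_range : ∀ c q, F c (e q) = e (act c q) := by
      intro c q
      have hq : ∃ q', e q' = e q := ⟨q, rfl⟩
      have : hq.choose = q := he hq.choose_spec
      simp only [F, dif_pos hq, this]
    have hF_not : ∀ c n, (¬ ∃ q, e q = n) → F c n = n := by
      intro c n hn; simp only [F, dif_neg hn]
    let φ : M →* TransformationMonoid :=
      { toFun := F
        map_one' := by
          funext n
          show F 1 n = n
          by_cases hq : ∃ q, e q = n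
          · obtain ⟨q, rfl⟩ := hq
            rw [hF_range, hact_one]
          · exact hF_not 1 n hq
        map_mul' := by
          intro c d
          funext n
          show F (c * d) n = F d (F c n)
          by_cases hq : ∃ q, e q = n
          · obtain ⟨q, rfl⟩ := hq
            rw [hF_range, hF_range, hF_range, hact_mul]
          · rw [hF_not _ _ hq, hF_not _ _ hq, hF_not _ _ hq] }
    have hcont := h φ
    have hopen : IsOpen {f : TransformationMonoid | (f : ℕ → ℕ) (e (Quotient.mk ρ 1)) = e (Quotient.mk ρ m)} := by
      have := (continuous_apply (A := fun _ : ℕ => ℕ) (e (Quotient.mk ρ 1))).isOpen_preimage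
        {e (Quotient.mk ρ m)} (isOpen_discrete _)
      exact this
    have := hcont.isOpen_preimage _ hopen
    have hset : (⇑φ ⁻¹' {f : TransformationMonoid | (f : ℕ → ℕ) (e (Quotient.mk ρ 1)) = e (Quotient.mk ρ m)}) = {x : M | ρ.r x m} := by
      ext x
      simp only [Set.mem_preimage, Set.mem_setOf_eq]
      show F x (e (Quotient.mk ρ 1)) = e (Quotient.mk ρ m) ↔ ρ.r x m
      rw [hF_range]
      have : act x (Quotient.mk ρ 1) = Quotient.mk ρ x := by
        show Quotient.mk ρ (1 * x) = Quotient.mk ρ x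
        rw [one_mul]
      rw [this]
      constructor
      · intro hx
        exact Quotient.exact (he hx)
      · intro hx
        exact congrArg e (Quotient.sound hx)
    rw [hset] at this
    exact this
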